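/- Let F be a finite field, k ≤ n ≤ |F|, and let Γ = (V,E) be an n-RIM whose indexing permutation is the identity (i.e. E(E(v,j), j) = v for all (v,j)). Let P(Γ) := {(v,j) ∈ V × {1,…,n} : E(v,j) = v} be the set of petal indices. Then the dimension of C(Γ,k) as an F-vector space satisfies 2·dim_F C(Γ,k) ≥ (2k − n)·|V| + |P(Γ)|. -/
import Mathlib

set_option synthInstance.maxHeartbeats 1000000
set_option maxHeartbeats 1000000


open Polynomial

/-- The Reed–Solomon code `RS[n,k]` as a submodule of `F^n`: the image of the space of
polynomials of degree `< k` under evaluation at the points `x 1, …, x n`. -/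
noncomputable def RSsubmodule (F : Type*) [Field F] (n k : ℕ) (x : Fin n → F) :
    Submodule F (Fin n → F) :=
  (Polynomial.degreeLT F k).map (LinearMap.pi fun j : Fin n => Polynomial.leval (x j))

/-- The graph code `C(Γ,k)` of an `n`-RIM `Γ = (V,E)` (here with identity indexing
permutation), as a submodule of `F^(V × Fin n)`: edge-consistent words all of whose
local views lie in `RS[n,k]`. -/
noncomputable def graphCode (F : Type*) [Field F] (n k : ℕ) (x : Fin n → F)
    (V : Type*) (E : V → Fin n → V) : Submodule F ((V × Fin n) → F) :=
  (⨅ p : V × Fin n,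
      LinearMap.ker ((LinearMap.proj p : ((V × Fin n) → F) →ₗ[F] F)
        - LinearMap.proj (E p.1 p.2, p.2))) ⊓
  (⨅ v : V,
      Submodule.comap (LinearMap.funLeft F F (fun j : Fin n => (v, j)))
        (RSsubmodule F n k x))

/-- Auxiliary: the dimension of the "all local views in RS" space is `|V| * k`. -/
theorem finrank_localRS (F : Type*) [Field F] (n k : ℕ) (hkn : k ≤ n)
    (x : Fin n → F) (hx : Function.Injective x) (V : Type*) [Fintype V] :
    Module.finrank F ↥((⨅ v : V,
      Submodule.comap (LinearMap.funLeft F F (fun j : Fin n => (v, j)))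
        (RSsubmodule F n k x) : Submodule F ((V × Fin n) → F))) = Fintype.card V * k := by
  classical
  set Λ : (V → Polynomial.degreeLT F k) →ₗ[F] ((V × Fin n) → F) :=
    LinearMap.pi fun p : V × Fin n =>
      (Polynomial.leval (x p.2) ∘ₗ (Polynomial.degreeLT F k).subtype) ∘ₗ LinearMap.proj p.1 with hΛ
  have hinj : Function.Injective Λ := by
    rw [← LinearMap.ker_eq_bot, eq_bot_iff]
    intro g hg
    simp only [LinearMap.mem_ker] at hg
    have hg' : ∀ (v : V) (j : Fin n), ((g v : F[X])).eval (x j) = 0 := by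
      intro v j
      have := congrFun hg (v, j)
      simpa [Λ] using this
    ext v : 1
    have hz : (g v : F[X]) = 0 := by
      by_cases h0 : (g v : F[X]) = 0
      · exact h0
      · refine Polynomial.eq_zero_of_natDegree_lt_card_of_eval_eq_zero _ hx (hg' v) ?_
        rw [Fintype.card_fin]
        exact lt_of_lt_of_le ((Polynomial.natDegree_lt_iff_degree_lt h0).2
          (Polynomial.mem_degreeLT.1 (g v).2)) hkn
    exact Subtype.ext hz
  have hrange : LinearMap.range Λ = (⨅ v : V,
      Submodule.comap (LinearMap.funLeft F F (fun j : Fin n => (v, j)))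
        (RSsubmodule F n k x)) := by
    apply le_antisymm
    · rintro _ ⟨g, rfl⟩
      rw [Submodule.mem_iInf]
      intro v
      refine ⟨g v, (g v).2, ?_⟩
      ext j
      simp [Λ, LinearMap.funLeft]
    · intro f hf
      rw [Submodule.mem_iInf] at hf
      choose P hP hPf using fun v => hf v
      refine ⟨fun v => ⟨P v, hP v⟩, ?_⟩
      ext ⟨v, j⟩
      have := congrFun (hPf v) j
      simp only [LinearMap.pi_apply, LinearMap.funLeft_apply] at this ⊢
      simpa [Λ] using this
  haveI : Module.Finite F (Polynomial.degreeLT F k) :=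
    Module.Finite.equiv (Polynomial.degreeLTEquiv F k).symm
  rw [← hrange, LinearMap.finrank_range_of_inj hinj]
  have : Module.finrank F (Polynomial.degreeLT F k) = k := by
    simpa using (Polynomial.degreeLTEquiv F k).finrank_eq.trans
      (Module.finrank_fintype_fun_eq_card F)
  simp [Module.finrank_pi_fintype, this, Finset.sum_const]

/-- **Lower bound on the dimension of a graph code:**
`2 · dim C(Γ,k) ≥ (2k - n)·|V| + |P(Γ)|` where `P(Γ)` is the set of petal indices. -/
theorem graphCode_dim_lower_bound
    (F : Type*) [Field F] [Fintype F]
    (n k : ℕ) (hkn : k ≤ n) (hn : n ≤ Fintype.card F)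
    (x : Fin n → F) (hx : Function.Injective x)
    (V : Type*) [Fintype V] [Nonempty V] [DecidableEq V]
    (E : V → Fin n → V)
    (hE : ∀ (v : V) (j : Fin n), E (E v j) j = v) :
    (2 * (k : ℤ) - n) * Fintype.card V
        + Fintype.card {p : V × Fin n // E p.1 p.2 = p.1}
      ≤ 2 * Module.finrank F (graphCode F n k x V E) := by
  classical
  set σ : V × Fin n → V × Fin n := fun p => (E p.1 p.2, p.2) with hσ
  have hσσ : ∀ p, σ (σ p) = p := by intro p; simp [σ, hE]
  set W : Submodule F ((V × Fin n) → F) :=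
    (⨅ v : V, Submodule.comap (LinearMap.funLeft F F (fun j : Fin n => (v, j)))
      (RSsubmodule F n k x)) with hW
  set K : Submodule F ((V × Fin n) → F) :=
    (⨅ p : V × Fin n,
      LinearMap.ker ((LinearMap.proj p : ((V × Fin n) → F) →ₗ[F] F)
        - LinearMap.proj (E p.1 p.2, p.2))) with hK
  have hGC : graphCode F n k x V E = K ⊓ W := rfl
  -- choose representatives of the nontrivial orbits of σ
  set e : V × Fin n ≃ Fin (Fintype.card (V × Fin n)) := Fintype.equivFin _ with he
  set S : Finset (V × Fin n) :=
    Finset.univ.filter (fun p => σ p ≠ p ∧ e p < e (σ p)) with hS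
  set ψ : ((V × Fin n) → F) →ₗ[F] (S → F) :=
    LinearMap.pi fun s : S =>
      (LinearMap.proj (s : V × Fin n) : ((V × Fin n) → F) →ₗ[F] F)
        - LinearMap.proj (σ (s : V × Fin n)) with hψ
  -- kernel of ψ is contained in K
  have hker : LinearMap.ker ψ ≤ K := by
    intro f hf
    simp only [LinearMap.mem_ker] at hf
    have hfS : ∀ p ∈ S, f p - f (σ p) = 0 := by
      intro p hp
      have := congrFun hf ⟨p, hp⟩
      simpa [ψ] using this
    rw [hK, Submodule.mem_iInf]
    intro p
    simp only [LinearMap.mem_ker, LinearMap.sub_apply, LinearMap.proj_apply]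
    change f p - f (σ p) = 0
    by_cases h1 : σ p = p
    · rw [h1]; ring
    · have h12 : e p ≠ e (σ p) := fun h => h1 ((e.injective h).symm)
      rcases h12.lt_or_gt with h2 | h2
      · exact hfS p (by
          simp only [hS, Finset.mem_filter, Finset.mem_univ, true_and]
          exact ⟨h1, h2⟩)
      · have hne : σ (σ p) ≠ σ p := by
          rw [hσσ p]; exact fun h => h1 h.symm
        have h3 : σ p ∈ S := by
          simp only [hS, Finset.mem_filter, Finset.mem_univ, true_and]
          refine ⟨hne, ?_⟩
          rw [hσσ p]
          exact h2
        have := hfS (σ p) h3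
        rw [hσσ p] at this
        rw [sub_eq_zero] at this ⊢
        exact this.symm
  -- rank-nullity for ψ restricted to W
  set φ : W →ₗ[F] (S → F) := ψ ∘ₗ W.subtype with hφ
  have hrn : Module.finrank F (LinearMap.range φ) + Module.finrank F (LinearMap.ker φ)
      = Module.finrank F W := LinearMap.finrank_range_add_finrank_ker φ
  have hrange_le : Module.finrank F (LinearMap.range φ) ≤ S.card := by
    have := Submodule.finrank_le (LinearMap.range φ)
    rwa [Module.finrank_fintype_fun_eq_card, Fintype.card_coe] at this
  have hGCle : graphCode F n k x V E ≤ W := inf_le_right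
  have hker_le : LinearMap.ker φ ≤
      Submodule.comap W.subtype (graphCode F n k x V E) := by
    intro g hg
    simp only [LinearMap.mem_ker, hφ, LinearMap.comp_apply] at hg
    simp only [Submodule.mem_comap]
    rw [hGC]
    exact ⟨hker hg, g.2⟩
  have hkerrank : Module.finrank F (LinearMap.ker φ)
      ≤ Module.finrank F (graphCode F n k x V E) := by
    calc Module.finrank F (LinearMap.ker φ)
        ≤ Module.finrank F (Submodule.comap W.subtype (graphCode F n k x V E)) :=
          Submodule.finrank_mono hker_le
      _ = Module.finrank F (graphCode F n k x V E) :=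
          (Submodule.comapSubtypeEquivOfLe hGCle).finrank_eq
  have hWrank : Module.finrank F W = Fintype.card V * k :=
    finrank_localRS F n k hkn x hx V
  -- counting: 2 * S.card + petals = n * |V|
  set T : Finset (V × Fin n) := Finset.univ.filter (fun p => σ p ≠ p) with hT
  set S' : Finset (V × Fin n) :=
    Finset.univ.filter (fun p => σ p ≠ p ∧ e (σ p) < e p) with hS'
  have hScard : S.card = S'.card := by
    apply Finset.card_bij (fun p _ => σ p)
    · intro p hp
      simp only [S, Finset.mem_filter, Finset.mem_univ, true_and] at hp
      simp only [S', Finset.mem_filter, Finset.mem_univ, true_and, hσσ p]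
      exact ⟨fun h => hp.1 h.symm, hp.2⟩
    · intro p hp q hq h
      have := congrArg σ h
      rwa [hσσ, hσσ] at this
    · intro p hp
      simp only [S', Finset.mem_filter, Finset.mem_univ, true_and] at hp
      refine ⟨σ p, ?_, hσσ p⟩
      simp only [S, Finset.mem_filter, Finset.mem_univ, true_and, hσσ p]
      exact ⟨fun h => hp.1 h.symm, hp.2⟩
  have hTsplit : T.card = S.card + S'.card := by
    rw [hT, hS, hS']
    rw [← Finset.card_union_of_disjoint]
    · congr 1
      ext p
      simp only [Finset.mem_union, Finset.mem_filter, Finset.mem_univ, true_and]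
      constructor
      · intro h
        have h12 : e p ≠ e (σ p) := fun hh => h ((e.injective hh).symm)
        rcases h12.lt_or_gt with h2 | h2
        · exact Or.inl ⟨h, h2⟩
        · exact Or.inr ⟨h, h2⟩
      · rintro (⟨h, _⟩ | ⟨h, _⟩) <;> exact h
    · rw [Finset.disjoint_filter]
      rintro p _ ⟨_, h1⟩ ⟨_, h2⟩
      exact absurd h1 (not_lt.2 h2.le)
  have hPcard : Fintype.card {p : V × Fin n // E p.1 p.2 = p.1}
      = (Finset.univ.filter (fun p : V × Fin n => σ p = p)).card := by
    rw [Fintype.card_subtype]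
    congr 1
    ext p
    simp only [Finset.mem_filter, Finset.mem_univ, true_and, σ, Prod.ext_iff]
    tauto
  have htotal : (Finset.univ.filter (fun p : V × Fin n => σ p = p)).card + T.card
      = n * Fintype.card V := by
    rw [hT]
    have := Finset.card_filter_add_card_filter_not
      (s := (Finset.univ : Finset (V × Fin n))) (p := fun p => σ p = p)
    simp only [Finset.card_univ, Fintype.card_prod, Fintype.card_fin] at this
    rw [show (Finset.filter (fun p => ¬ σ p = p) Finset.univ)
      = Finset.filter (fun p => σ p ≠ p) Finset.univ from rfl] at this
    rw [mul_comm]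
    omega
  -- put everything together
  have key : Fintype.card V * k ≤ Module.finrank F (graphCode F n k x V E) + S.card := by
    calc Fintype.card V * k = Module.finrank F W := hWrank.symm
      _ = Module.finrank F (LinearMap.range φ) + Module.finrank F (LinearMap.ker φ) := hrn.symm
      _ ≤ S.card + Module.finrank F (graphCode F n k x V E) := by
          exact add_le_add hrange_le hkerrank
      _ = Module.finrank F (graphCode F n k x V E) + S.card := by ring
  have h2S : 2 * S.card = T.card := by omega
  have hP : Fintype.card {p : V × Fin n // E p.1 p.2 = p.1} + T.card = n * Fintype.card V := by
    rw [hPcard]; exact htotal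
  -- integer arithmetic
  have hcast : (2 * (k : ℤ) - n) * Fintype.card V
      = 2 * ((Fintype.card V * k : ℕ) : ℤ) - ((n * Fintype.card V : ℕ) : ℤ) := by
    push_cast; ring
  rw [hcast]
  have h1 : ((Fintype.card V * k : ℕ) : ℤ)
      ≤ (Module.finrank F (graphCode F n k x V E) : ℤ) + (S.card : ℤ) := by
    exact_mod_cast key
  have h2 : 2 * (S.card : ℤ) = (T.card : ℤ) := by exact_mod_cast h2S
  have h3 : ((Fintype.card {p : V × Fin n // E p.1 p.2 = p.1} : ℕ) : ℤ) + (T.card : ℤ)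
      = ((n * Fintype.card V : ℕ) : ℤ) := by exact_mod_cast hP
  linarith
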